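/- arXiv:2110.13378 — 2 statements merged into one kernel-verified Lean document; each statement's English description precedes it below -/
import Mathlib

section
/- With υ_∞(y) = log(8/(1+|y|²)²), one has ∫_{ℝ²} (8(|y|²-1)²/(|y|²+1)⁴) · [ (1/2)υ_∞(y)² + υ_∞(y) - ω⁰_∞(y) ] dy = 8π, where ω⁰_∞ is the radial solution of Δω + 8/(1+|y|²)² ω = 8/(1+|y|²)² · (1/2)υ_∞² given by the explicit formula ω⁰_∞(y) = (1/2)υ_∞(y)² + 6 log(|y|²+1) + (2 log 8 - 10)/(|y|²+1) + ((|y|²-1)/(|y|²+1)) [ 4∫_{|y|²}^{∞} log(s+1)/(s(s+1)) ds - 2 log²(|y|²+1) - (1/2) log² 8 ]. -/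
noncomputable section
open MeasureTheory Real Set Filter Topology

/-- `υ_∞(y) = log(8/(1+|y|²)²)`. -/
def vInf (y : EuclideanSpace ℝ (Fin 2)) : ℝ := Real.log (8 / (1 + ‖y‖ ^ 2) ^ 2)

/-- The explicit radial solution `ω⁰_∞`. -/
def w0Inf (y : EuclideanSpace ℝ (Fin 2)) : ℝ :=
  (1 / 2) * (vInf y) ^ 2 + 6 * Real.log (‖y‖ ^ 2 + 1)
    + (2 * Real.log 8 - 10) / (‖y‖ ^ 2 + 1)
    + (‖y‖ ^ 2 - 1) / (‖y‖ ^ 2 + 1) *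
        (4 * (∫ s in Set.Ioi (‖y‖ ^ 2), Real.log (s + 1) / (s * (s + 1)))
          - 2 * (Real.log (‖y‖ ^ 2 + 1)) ^ 2 - (1 / 2) * (Real.log 8) ^ 2)



def g0 (s : ℝ) : ℝ := Real.log (s + 1) / (s * (s + 1))
def Ifun (t : ℝ) : ℝ := ∫ s in Set.Ioi t, g0 s

lemma g0_meas : Measurable g0 :=
  (Real.measurable_log.comp (measurable_id.add_const 1)).div
    (measurable_id.mul (measurable_id.add_const 1))

lemma g0_contAt {s : ℝ} (hs : 0 < s) : ContinuousAt g0 s := by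
  have h2 : s * (s + 1) ≠ 0 := by positivity
  exact ((continuousAt_id.add continuousAt_const).log (by show s + 1 ≠ 0; positivity)).div
    (continuousAt_id.mul (continuousAt_id.add continuousAt_const)) h2

lemma g0_nonneg {s : ℝ} (hs : 0 < s) : 0 ≤ g0 s := by
  have h1 : (0:ℝ) ≤ Real.log (s + 1) := Real.log_nonneg (by linarith)
  have h2 : (0:ℝ) < s * (s + 1) := by nlinarith
  exact div_nonneg h1 h2.le

lemma g0_le {s : ℝ} (hs : 0 < s) : g0 s ≤ 2 * s ^ (-(3/2) : ℝ) := by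
  have hb : Real.sqrt (s + 1) > 0 := Real.sqrt_pos.2 (by linarith)
  have hc : Real.sqrt s > 0 := Real.sqrt_pos.2 hs
  have hb2 : Real.sqrt (s + 1) ^ 2 = s + 1 := Real.sq_sqrt (by linarith)
  have hc2 : Real.sqrt s ^ 2 = s := Real.sq_sqrt hs.le
  have hcb : Real.sqrt s ≤ Real.sqrt (s + 1) := Real.sqrt_le_sqrt (by linarith)
  have hlog : Real.log (s + 1) ≤ 2 * (Real.sqrt (s + 1) - 1) := by
    have := Real.log_le_sub_one_of_pos hb
    have h := Real.log_sqrt (by linarith : (0:ℝ) ≤ s + 1)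
    nlinarith
  have hrp : s ^ (-(3/2) : ℝ) = (s * Real.sqrt s)⁻¹ := by
    rw [Real.rpow_neg hs.le]
    congr 1
    rw [show (3/2 : ℝ) = 1 + 1/2 by norm_num, Real.rpow_add hs, Real.rpow_one,
      ← Real.sqrt_eq_rpow]
  rw [hrp, g0, div_le_iff₀ (by nlinarith)]
  rw [inv_eq_one_div]
  have hpos : (0:ℝ) < s * Real.sqrt s := by positivity
  have key : Real.log (s + 1) * (s * Real.sqrt s) ≤ 2 * (s * (s + 1)) := by
    nlinarith [mul_pos hs hb, sq_nonneg (Real.sqrt (s+1) - Real.sqrt s),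
      mul_le_mul_of_nonneg_left hcb (by positivity : (0:ℝ) ≤ 2 * s),
      Real.log_nonneg (by linarith : (1:ℝ) ≤ s + 1)]
  calc Real.log (s + 1) ≤ 2 * (s * (s+1)) * (1 / (s * Real.sqrt s)) := by
        rw [mul_one_div, le_div_iff₀ hpos]; linarith
    _ = 2 * (1 / (s * Real.sqrt s)) * (s * (s+1)) := by ring

lemma integrableOn_g0 {x : ℝ} (hx : 0 < x) : IntegrableOn g0 (Ioi x) := by
  have hmaj : IntegrableOn (fun s : ℝ => 2 * s ^ (-(3/2) : ℝ)) (Ioi x) :=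
    (integrableOn_Ioi_rpow_of_lt (by norm_num) hx).const_mul 2
  refine Integrable.mono' hmaj (g0_meas.aestronglyMeasurable.restrict) ?_
  filter_upwards [ae_restrict_mem measurableSet_Ioi] with s hs
  have hs0 : 0 < s := hx.trans hs
  rw [Real.norm_eq_abs, abs_of_nonneg (g0_nonneg hs0)]
  exact g0_le hs0

lemma Ifun_nonneg {x : ℝ} (hx : 0 ≤ x) : 0 ≤ Ifun x :=
  setIntegral_nonneg measurableSet_Ioi fun s hs => g0_nonneg (hx.trans_lt hs)

lemma Ifun_le {x : ℝ} (hx : 0 < x) : Ifun x ≤ 4 * x ^ (-(1/2) : ℝ) := by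
  have hmaj : IntegrableOn (fun s : ℝ => 2 * s ^ (-(3/2) : ℝ)) (Ioi x) :=
    (integrableOn_Ioi_rpow_of_lt (by norm_num) hx).const_mul 2
  have h1 : Ifun x ≤ ∫ s in Ioi x, 2 * s ^ (-(3/2) : ℝ) :=
    setIntegral_mono_on (integrableOn_g0 hx) hmaj
      measurableSet_Ioi (fun s hs => g0_le (hx.trans hs))
  have h2 : ∫ s in Ioi x, 2 * s ^ (-(3/2) : ℝ) = 4 * x ^ (-(1/2) : ℝ) := by
    rw [MeasureTheory.integral_const_mul, integral_Ioi_rpow_of_lt (by norm_num) hx]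
    norm_num
    ring
  linarith [h1, h2.le]

lemma Ifun_eq {x b : ℝ} (hx : 0 < x) (hxb : x ≤ b) :
    Ifun x = (∫ s in x..b, g0 s) + Ifun b := by
  rw [intervalIntegral.integral_of_le hxb, Ifun, Ifun,
    ← Ioc_union_Ioi_eq_Ioi hxb,
    setIntegral_union (Ioc_disjoint_Ioi le_rfl) measurableSet_Ioi
      ((integrableOn_g0 hx).mono Ioc_subset_Ioi_self le_rfl)
      (integrableOn_g0 (hx.trans_le hxb))]

lemma Ifun_hasDerivAt {t : ℝ} (ht : 0 < t) : HasDerivAt Ifun (-g0 t) t := by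
  have hb : t < t + 1 := lt_add_one t
  have key : HasDerivAt (fun u => (∫ s in u..(t+1), g0 s) + Ifun (t+1)) (-g0 t) t := by
    have h1 : IntervalIntegrable g0 volume t (t+1) :=
      (intervalIntegrable_iff_integrableOn_Ioc_of_le hb.le).2
        ((integrableOn_g0 ht).mono Ioc_subset_Ioi_self le_rfl)
    have h2 : StronglyMeasurableAtFilter g0 (𝓝 t) :=
      ⟨univ, univ_mem, g0_meas.aestronglyMeasurable.restrict⟩
    simpa using (intervalIntegral.integral_hasDerivAt_left h1 h2 (g0_contAt ht)).add_const
      (Ifun (t+1))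
  refine key.congr_of_eventuallyEq ?_
  filter_upwards [Ioo_mem_nhds (by linarith : t/2 < t) hb] with x hx
  exact Ifun_eq (by simpa using lt_of_le_of_lt (by linarith : 0 ≤ t/2) hx.1) hx.2.le

lemma Ifun_contAt {t : ℝ} (ht : 0 < t) : ContinuousAt Ifun t :=
  (Ifun_hasDerivAt ht).continuousAt

def hfun (t : ℝ) : ℝ :=
  8 * (t - 1) ^ 2 / (t + 1) ^ 4 *
    (Real.log 8 - 8 * Real.log (t + 1) - (2 * Real.log 8 - 10) / (t + 1)
      - (t - 1) / (t + 1) *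
          (4 * Ifun t - 2 * (Real.log (t + 1)) ^ 2 - (1 / 2) * (Real.log 8) ^ 2))

def P1 (t : ℝ) : ℝ := (32 * t ^ 3 + 32 * t) * Ifun t / (t + 1) ^ 4

def Efun (t : ℝ) : ℝ :=
  ((32 - 8 * Real.log 8 - 4 * (Real.log 8) ^ 2 + 32 * Real.log (t + 1)
        - 16 * (Real.log (t + 1)) ^ 2) * (t + 1) ^ 3
    + (-88 + 24 * Real.log 8 + 12 * (Real.log 8) ^ 2 - 96 * Real.log (t + 1)
        + 48 * (Real.log (t + 1)) ^ 2) * (t + 1) ^ 2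
    + (128 - 32 * Real.log 8 - 16 * (Real.log 8) ^ 2 + 64 * Real.log (t + 1)
        - 64 * (Real.log (t + 1)) ^ 2) * (t + 1)
    + (-80 + 16 * Real.log 8 + 8 * (Real.log 8) ^ 2 + 32 * (Real.log (t + 1)) ^ 2))
  / (t + 1) ^ 4

def Ffun (t : ℝ) : ℝ := P1 t + Efun t

lemma Ffun_hasDerivAt {t : ℝ} (ht : 0 < t) : HasDerivAt Ffun (hfun t) t := by
  have ht1 : (0:ℝ) < t + 1 := by linarith
  have h1 : HasDerivAt (fun u : ℝ => u + 1) 1 t := (hasDerivAt_id t).add_const 1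
  have hp3 : HasDerivAt (fun u : ℝ => (u+1)^3) (3*(t+1)^2) t := by
    simpa using h1.fun_pow 3
  have hp2 : HasDerivAt (fun u : ℝ => (u+1)^2) (2*(t+1)) t := by
    simpa using h1.fun_pow 2
  have hp4 : HasDerivAt (fun u : ℝ => (u+1)^4) (4*(t+1)^3) t := by
    simpa using h1.fun_pow 4
  have hL : HasDerivAt (fun u : ℝ => Real.log (u+1)) (1/(t+1)) t := by
    simpa using h1.log ht1.ne'
  have hL2 : HasDerivAt (fun u : ℝ => (Real.log (u+1))^2) (2*Real.log (t+1)*(1/(t+1))) t := by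
    simpa using hL.fun_pow 2
  have hI := Ifun_hasDerivAt ht
  -- P1 part
  have hA : HasDerivAt (fun u : ℝ => 32*u^3 + 32*u) (96*t^2 + 32) t := by
    have := ((hasDerivAt_pow 3 t).const_mul (32:ℝ)).fun_add ((hasDerivAt_id' t).const_mul 32)
    exact this.congr_deriv (by push_cast; ring)
  have hN : HasDerivAt (fun u : ℝ => (32*u^3 + 32*u) * Ifun u)
      ((96*t^2 + 32) * Ifun t + (32*t^3 + 32*t) * (-g0 t)) t := hA.mul hI
  have hP1 : HasDerivAt P1
      ((((96*t^2 + 32) * Ifun t + (32*t^3 + 32*t) * (-g0 t)) * (t+1)^4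
        - (32*t^3 + 32*t) * Ifun t * (4*(t+1)^3)) / ((t+1)^4)^2) t := by
    exact hN.div hp4 (by positivity)
  -- Efun part: numerator
  have hb1 : HasDerivAt (fun u : ℝ => 32 - 8 * Real.log 8 - 4 * (Real.log 8) ^ 2
      + 32 * Real.log (u + 1) - 16 * (Real.log (u + 1)) ^ 2)
      (32 * (1/(t+1)) - 16 * (2*Real.log (t+1)*(1/(t+1)))) t := by
    simpa using ((((hasDerivAt_const t _).fun_add (hL.const_mul 32)).fun_sub (hL2.const_mul 16)))
  have hb2 : HasDerivAt (fun u : ℝ => -88 + 24 * Real.log 8 + 12 * (Real.log 8) ^ 2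
      - 96 * Real.log (u + 1) + 48 * (Real.log (u + 1)) ^ 2)
      (-(96 * (1/(t+1))) + 48 * (2*Real.log (t+1)*(1/(t+1)))) t := by
    simpa using ((((hasDerivAt_const t _).fun_sub (hL.const_mul 96)).fun_add (hL2.const_mul 48)))
  have hb3 : HasDerivAt (fun u : ℝ => 128 - 32 * Real.log 8 - 16 * (Real.log 8) ^ 2
      + 64 * Real.log (u + 1) - 64 * (Real.log (u + 1)) ^ 2)
      (64 * (1/(t+1)) - 64 * (2*Real.log (t+1)*(1/(t+1)))) t := by
    simpa using ((((hasDerivAt_const t _).fun_add (hL.const_mul 64)).fun_sub (hL2.const_mul 64)))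
  have hb4 : HasDerivAt (fun u : ℝ => -80 + 16 * Real.log 8 + 8 * (Real.log 8) ^ 2
      + 32 * (Real.log (u + 1)) ^ 2)
      (32 * (2*Real.log (t+1)*(1/(t+1)))) t := by
    simpa using ((hasDerivAt_const t (-80 + 16 * Real.log 8 + 8 * (Real.log 8) ^ 2)).fun_add (hL2.const_mul 32))
  have hnum := (((hb1.mul hp3).add (hb2.mul hp2)).add (hb3.mul h1)).add hb4
  have hE : HasDerivAt Efun
      (((((32 * (1/(t+1)) - 16 * (2*Real.log (t+1)*(1/(t+1)))) * (t+1)^3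
          + (32 - 8 * Real.log 8 - 4 * (Real.log 8) ^ 2 + 32 * Real.log (t + 1)
              - 16 * (Real.log (t + 1)) ^ 2) * (3*(t+1)^2))
        + ((-(96 * (1/(t+1))) + 48 * (2*Real.log (t+1)*(1/(t+1)))) * (t+1)^2
          + (-88 + 24 * Real.log 8 + 12 * (Real.log 8) ^ 2 - 96 * Real.log (t + 1)
              + 48 * (Real.log (t + 1)) ^ 2) * (2*(t+1)))
        + ((64 * (1/(t+1)) - 64 * (2*Real.log (t+1)*(1/(t+1)))) * (t+1)
          + (128 - 32 * Real.log 8 - 16 * (Real.log 8) ^ 2 + 64 * Real.log (t + 1)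
              - 64 * (Real.log (t + 1)) ^ 2) * 1)
        + 32 * (2*Real.log (t+1)*(1/(t+1)))) * (t+1)^4
        - ((32 - 8 * Real.log 8 - 4 * (Real.log 8) ^ 2 + 32 * Real.log (t + 1)
              - 16 * (Real.log (t + 1)) ^ 2) * (t + 1) ^ 3
          + (-88 + 24 * Real.log 8 + 12 * (Real.log 8) ^ 2 - 96 * Real.log (t + 1)
              + 48 * (Real.log (t + 1)) ^ 2) * (t + 1) ^ 2
          + (128 - 32 * Real.log 8 - 16 * (Real.log 8) ^ 2 + 64 * Real.log (t + 1)
              - 64 * (Real.log (t + 1)) ^ 2) * (t + 1)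
          + (-80 + 16 * Real.log 8 + 8 * (Real.log 8) ^ 2
              + 32 * (Real.log (t + 1)) ^ 2)) * (4*(t+1)^3)) / ((t+1)^4)^2) t :=
    hnum.div hp4 (by positivity)
  have hsum := hP1.add hE
  have heq : (((96*t^2 + 32) * Ifun t + (32*t^3 + 32*t) * (-g0 t)) * (t+1)^4
        - (32*t^3 + 32*t) * Ifun t * (4*(t+1)^3)) / ((t+1)^4)^2
      + ((((32 * (1/(t+1)) - 16 * (2*Real.log (t+1)*(1/(t+1)))) * (t+1)^3
          + (32 - 8 * Real.log 8 - 4 * (Real.log 8) ^ 2 + 32 * Real.log (t + 1)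
              - 16 * (Real.log (t + 1)) ^ 2) * (3*(t+1)^2))
        + ((-(96 * (1/(t+1))) + 48 * (2*Real.log (t+1)*(1/(t+1)))) * (t+1)^2
          + (-88 + 24 * Real.log 8 + 12 * (Real.log 8) ^ 2 - 96 * Real.log (t + 1)
              + 48 * (Real.log (t + 1)) ^ 2) * (2*(t+1)))
        + ((64 * (1/(t+1)) - 64 * (2*Real.log (t+1)*(1/(t+1)))) * (t+1)
          + (128 - 32 * Real.log 8 - 16 * (Real.log 8) ^ 2 + 64 * Real.log (t + 1)
              - 64 * (Real.log (t + 1)) ^ 2) * 1)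
        + 32 * (2*Real.log (t+1)*(1/(t+1)))) * (t+1)^4
        - ((32 - 8 * Real.log 8 - 4 * (Real.log 8) ^ 2 + 32 * Real.log (t + 1)
              - 16 * (Real.log (t + 1)) ^ 2) * (t + 1) ^ 3
          + (-88 + 24 * Real.log 8 + 12 * (Real.log 8) ^ 2 - 96 * Real.log (t + 1)
              + 48 * (Real.log (t + 1)) ^ 2) * (t + 1) ^ 2
          + (128 - 32 * Real.log 8 - 16 * (Real.log 8) ^ 2 + 64 * Real.log (t + 1)
              - 64 * (Real.log (t + 1)) ^ 2) * (t + 1)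
          + (-80 + 16 * Real.log 8 + 8 * (Real.log 8) ^ 2
              + 32 * (Real.log (t + 1)) ^ 2)) * (4*(t+1)^3)) / ((t+1)^4)^2
      = hfun t := by
    simp only [hfun, g0]
    have h2 : t ≠ 0 := ht.ne'
    have h3 : t + 1 ≠ 0 := ht1.ne'
    field_simp
    ring
  rw [heq] at hsum
  exact hsum

lemma tendsto_logpow (n k : ℕ) (hk : 1 ≤ k) :
    Tendsto (fun t : ℝ => (Real.log (t+1))^n / (t+1)^k) atTop (𝓝 0) := by
  have base : Tendsto (fun u : ℝ => (Real.log u)^n / u) atTop (𝓝 0) := by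
    simpa using Real.tendsto_pow_log_div_mul_add_atTop 1 0 n one_ne_zero
  have comp : Tendsto (fun t : ℝ => (Real.log (t+1))^n / (t+1)) atTop (𝓝 0) :=
    base.comp (tendsto_atTop_add_const_right atTop 1 tendsto_id)
  refine squeeze_zero_norm' ?_ comp
  filter_upwards [eventually_ge_atTop (0:ℝ)] with t htt
  have ht1 : (1:ℝ) ≤ t + 1 := by linarith
  have hLn : (0:ℝ) ≤ (Real.log (t+1))^n := pow_nonneg (Real.log_nonneg ht1) n
  have hk1 : (t+1) ≤ (t+1)^k := le_self_pow₀ ht1 (by omega)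
  rw [Real.norm_eq_abs, abs_of_nonneg (div_nonneg hLn (by positivity))]
  exact div_le_div_of_nonneg_left hLn (by linarith) hk1

lemma rpow_neg_three_halves {t : ℝ} (ht : 0 < t) :
    t ^ (-(3/2) : ℝ) = Real.sqrt t / t^2 := by
  rw [show (-(3/2) : ℝ) = 1/2 - 2 by norm_num, Real.rpow_sub ht, Real.sqrt_eq_rpow,
    show ((2:ℝ) : ℝ) = ((2:ℕ) : ℝ) by norm_num, Real.rpow_natCast]

lemma P1_tendsto : Tendsto P1 atTop (𝓝 0) := by
  have hmaj : Tendsto (fun t : ℝ => 256 * t ^ (-(1/2) : ℝ)) atTop (𝓝 0) := by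
    simpa using (tendsto_rpow_neg_atTop (by norm_num : (0:ℝ) < 1/2)).const_mul (256:ℝ)
  refine squeeze_zero_norm' ?_ hmaj
  filter_upwards [eventually_ge_atTop (1:ℝ)] with t htt
  have ht0 : (0:ℝ) < t := lt_of_lt_of_le one_pos htt
  have hInn : 0 ≤ Ifun t := Ifun_nonneg ht0.le
  have hIle : Ifun t ≤ 4 * t ^ (-(1/2) : ℝ) := Ifun_le ht0
  have hA : (0:ℝ) ≤ 32 * t ^ 3 + 32 * t := by positivity
  have hP1nn : 0 ≤ P1 t := by
    rw [P1]; positivity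
  rw [Real.norm_eq_abs, abs_of_nonneg hP1nn, P1]
  have hden : (t:ℝ)^4 ≤ (t+1)^4 := by nlinarith
  have key : (32 * t ^ 3 + 32 * t) * Ifun t / (t + 1) ^ 4
      ≤ (64 * t ^ 3) * (4 * t ^ (-(1/2) : ℝ)) / t ^ 4 := by
    apply div_le_div₀ (by positivity) ?_ (by positivity) hden
    apply mul_le_mul ?_ hIle hInn (by positivity)
    nlinarith [mul_nonneg (mul_nonneg ht0.le (sub_nonneg.2 htt)) (by positivity : (0:ℝ) ≤ t + 1)]
  refine key.trans ?_
  have heq : (64 * t ^ 3) * (4 * t ^ (-(1/2) : ℝ)) / t ^ 4 = 256 * t ^ (-(3/2):ℝ) := by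
    rw [show (t:ℝ)^3 = t^(3:ℝ) by rw [← Real.rpow_natCast t 3]; norm_num,
      show (t:ℝ)^4 = t^(4:ℝ) by rw [← Real.rpow_natCast t 4]; norm_num,
      show 64 * t^(3:ℝ) * (4 * t^(-(1/2):ℝ)) / t^(4:ℝ)
        = 256 * (t^(3:ℝ) * t^(-(1/2):ℝ) / t^(4:ℝ)) by ring,
      ← Real.rpow_add ht0, ← Real.rpow_sub ht0]
    norm_num
  rw [heq]
  exact mul_le_mul_of_nonneg_left
    (Real.rpow_le_rpow_of_exponent_le htt (by norm_num)) (by norm_num)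

lemma Efun_decomp {t : ℝ} (ht : 0 < t) : Efun t =
    (32 - 8 * Real.log 8 - 4 * (Real.log 8) ^ 2) * ((Real.log (t+1))^0 / (t+1)^1)
    + 32 * ((Real.log (t+1))^1 / (t+1)^1)
    + (-16) * ((Real.log (t+1))^2 / (t+1)^1)
    + (-88 + 24 * Real.log 8 + 12 * (Real.log 8) ^ 2) * ((Real.log (t+1))^0 / (t+1)^2)
    + (-96) * ((Real.log (t+1))^1 / (t+1)^2)
    + 48 * ((Real.log (t+1))^2 / (t+1)^2)
    + (128 - 32 * Real.log 8 - 16 * (Real.log 8) ^ 2) * ((Real.log (t+1))^0 / (t+1)^3)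
    + 64 * ((Real.log (t+1))^1 / (t+1)^3)
    + (-64) * ((Real.log (t+1))^2 / (t+1)^3)
    + (-80 + 16 * Real.log 8 + 8 * (Real.log 8) ^ 2) * ((Real.log (t+1))^0 / (t+1)^4)
    + 32 * ((Real.log (t+1))^2 / (t+1)^4) := by
  have h3 : t + 1 ≠ 0 := by positivity
  rw [Efun]
  field_simp
  ring

lemma Efun_tendsto : Tendsto Efun atTop (𝓝 0) := by
  have T : ∀ (a : ℝ) (n k : ℕ), 1 ≤ k →
      Tendsto (fun t : ℝ => a * ((Real.log (t+1))^n / (t+1)^k)) atTop (𝓝 0) := by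
    intro a n k hk
    simpa using (tendsto_logpow n k hk).const_mul a
  have big := ((((((((((T (32 - 8 * Real.log 8 - 4 * (Real.log 8) ^ 2) 0 1 le_rfl).add
    (T 32 1 1 le_rfl)).add (T (-16) 2 1 le_rfl)).add
    (T (-88 + 24 * Real.log 8 + 12 * (Real.log 8) ^ 2) 0 2 one_le_two)).add
    (T (-96) 1 2 one_le_two)).add (T 48 2 2 one_le_two)).add
    (T (128 - 32 * Real.log 8 - 16 * (Real.log 8) ^ 2) 0 3 (by norm_num))).add
    (T 64 1 3 (by norm_num))).add (T (-64) 2 3 (by norm_num))).add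
    (T (-80 + 16 * Real.log 8 + 8 * (Real.log 8) ^ 2) 0 4 (by norm_num))).add
    (T 32 2 4 (by norm_num))
  rw [show ((0:ℝ)+0+0+0+0+0+0+0+0+0+0 : ℝ) = 0 by norm_num] at big
  refine big.congr' ?_
  filter_upwards [eventually_gt_atTop (0:ℝ)] with t ht
  exact (Efun_decomp ht).symm

lemma Efun_contAt0 : ContinuousAt Efun 0 := by
  unfold Efun
  fun_prop (disch := norm_num)

lemma Ffun_tendsto : Tendsto Ffun atTop (𝓝 0) := by
  have := P1_tendsto.add Efun_tendsto; simp only [add_zero] at this; exact this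

lemma P1_zero : P1 0 = 0 := by simp [P1]

lemma Ffun_zero : Ffun 0 = -8 := by
  rw [Ffun, P1_zero, Efun]
  norm_num
  ring

lemma Ffun_cwa : ContinuousWithinAt Ffun (Ici 0) 0 := by
  have hP : ContinuousWithinAt P1 (Ici 0) 0 := by
    unfold ContinuousWithinAt
    rw [P1_zero]
    have hmaj : Tendsto (fun t : ℝ => 256 * Real.sqrt t) (𝓝[Ici 0] 0) (𝓝 0) := by
      have := (Real.continuous_sqrt.tendsto' 0 0 Real.sqrt_zero).const_mul (256:ℝ)
      simpa using this.mono_left nhdsWithin_le_nhds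
    refine squeeze_zero_norm' ?_ hmaj
    filter_upwards [Icc_mem_nhdsGE zero_lt_one] with t htm
    rcases eq_or_lt_of_le htm.1 with h0 | h0
    · simp [P1, ← h0]
    · have ht1 : t ≤ 1 := htm.2
      have hA : (0:ℝ) ≤ 32 * t ^ 3 + 32 * t := by nlinarith [pow_pos h0 3]
      have hP1nn : 0 ≤ P1 t := by
        rw [P1]; exact div_nonneg (mul_nonneg hA (Ifun_nonneg h0.le)) (by positivity)
      rw [Real.norm_eq_abs, abs_of_nonneg hP1nn, P1]
      have hnum : (32 * t ^ 3 + 32 * t) * Ifun t ≤ 64 * t * (4 * t ^ (-(1/2):ℝ)) := by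
        apply mul_le_mul ?_ (Ifun_le h0) (Ifun_nonneg h0.le) (by linarith)
        nlinarith [mul_nonneg (mul_nonneg h0.le (sub_nonneg.2 ht1)) (by linarith : (0:ℝ) ≤ 1 + t)]
      have hden : (1:ℝ) ≤ (t+1)^4 := one_le_pow₀ (by linarith)
      calc (32 * t ^ 3 + 32 * t) * Ifun t / (t + 1) ^ 4
          ≤ (32 * t ^ 3 + 32 * t) * Ifun t / 1 := by
            exact div_le_div_of_nonneg_left
              (mul_nonneg hA (Ifun_nonneg h0.le)) one_pos hden
        _ = (32 * t ^ 3 + 32 * t) * Ifun t := by ring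
        _ ≤ 64 * t * (4 * t ^ (-(1/2):ℝ)) := hnum
        _ = 256 * (t * t ^ (-(1/2):ℝ)) := by ring
        _ = 256 * Real.sqrt t := by
            rw [show (t:ℝ) * t ^ (-(1/2):ℝ) = t^(1:ℝ) * t ^ (-(1/2):ℝ) by rw [Real.rpow_one],
              ← Real.rpow_add h0, Real.sqrt_eq_rpow]
            norm_num
  exact hP.add Efun_contAt0.continuousWithinAt


lemma log8_bounds : (0:ℝ) ≤ Real.log 8 ∧ Real.log 8 ≤ 7 :=
  ⟨Real.log_nonneg (by norm_num),
   by linarith [Real.log_le_sub_one_of_pos (by norm_num : (0:ℝ) < 8)]⟩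

lemma hfun_contOn : ContinuousOn hfun (Ioi 0) := by
  intro t ht
  have ht0 : (0:ℝ) < t := ht
  have ht1 : t + 1 ≠ 0 := by positivity
  apply ContinuousAt.continuousWithinAt
  have hL : ContinuousAt (fun u : ℝ => Real.log (u + 1)) t := by
    fun_prop (disch := exact ht1)
  have hI : ContinuousAt Ifun t := Ifun_contAt ht0
  apply ContinuousAt.mul
  · fun_prop (disch := exact pow_ne_zero 4 ht1)
  · apply ContinuousAt.sub
    · apply ContinuousAt.sub
      · apply ContinuousAt.sub continuousAt_const (hL.const_mul 8)
      · exact continuousAt_const.div (continuousAt_id.add continuousAt_const) ht1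
    · apply ContinuousAt.mul
      · exact ((continuousAt_id.sub continuousAt_const).div
          (continuousAt_id.add continuousAt_const) ht1)
      · exact ((hI.const_mul 4).sub ((hL.pow 2).const_mul 2)).sub continuousAt_const

lemma hfun_bound1 {t : ℝ} (ht0 : 0 < t) (ht1 : t ≤ 1) :
    ‖hfun t‖ ≤ 600 + 128 * t ^ (-(1/2) : ℝ) := by
  obtain ⟨hc0, hc7⟩ := log8_bounds
  have htp : (0:ℝ) < t + 1 := by linarith
  have hL0 : 0 ≤ Real.log (t + 1) := Real.log_nonneg (by linarith)
  have hL1 : Real.log (t + 1) ≤ 1 :=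
    (Real.log_le_sub_one_of_pos htp).trans (by linarith)
  have hI0 : 0 ≤ Ifun t := Ifun_nonneg ht0.le
  have hIle : Ifun t ≤ 4 * t ^ (-(1/2) : ℝ) := Ifun_le ht0
  have hrp0 : (0:ℝ) ≤ t ^ (-(1/2) : ℝ) := Real.rpow_nonneg ht0.le _
  have hq : |(t - 1) / (t + 1)| ≤ 1 := by
    rw [abs_div, div_le_one (by rwa [abs_of_pos htp])]
    rw [abs_of_pos htp, abs_of_nonpos (by linarith)]
    linarith
  have hinner : |4 * Ifun t - 2 * (Real.log (t + 1)) ^ 2 - (1/2) * (Real.log 8) ^ 2|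
      ≤ 16 * t ^ (-(1/2) : ℝ) + 27 := by
    rw [abs_le]; constructor <;> nlinarith
  have hqi : |(t - 1) / (t + 1) * (4 * Ifun t - 2 * (Real.log (t + 1)) ^ 2
      - (1/2) * (Real.log 8) ^ 2)| ≤ 16 * t ^ (-(1/2) : ℝ) + 27 := by
    rw [abs_mul]
    calc |(t - 1) / (t + 1)| * |_| ≤ 1 * (16 * t ^ (-(1/2) : ℝ) + 27) :=
          mul_le_mul hq hinner (abs_nonneg _) zero_le_one
      _ = 16 * t ^ (-(1/2) : ℝ) + 27 := one_mul _
  have hd1 : (2 * Real.log 8 - 10) / (t + 1) ≤ 4 := by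
    rw [div_le_iff₀ htp]; nlinarith
  have hd2 : -10 ≤ (2 * Real.log 8 - 10) / (t + 1) := by
    rw [le_div_iff₀ htp]; nlinarith
  have hX : |Real.log 8 - 8 * Real.log (t + 1) - (2 * Real.log 8 - 10) / (t + 1)
      - (t - 1) / (t + 1) * (4 * Ifun t - 2 * (Real.log (t + 1)) ^ 2
        - (1/2) * (Real.log 8) ^ 2)| ≤ 52 + 16 * t ^ (-(1/2) : ℝ) := by
    have h := abs_le.1 hqi
    rw [abs_le]; constructor <;> nlinarith
  have hcoef : |8 * (t - 1) ^ 2 / (t + 1) ^ 4| ≤ 8 := by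
    rw [abs_of_nonneg (by positivity), div_le_iff₀ (by positivity)]
    nlinarith [sq_nonneg (t-1), one_le_pow₀ (by linarith : (1:ℝ) ≤ t + 1) (n := 4)]
  rw [Real.norm_eq_abs, hfun, abs_mul]
  calc |8 * (t - 1) ^ 2 / (t + 1) ^ 4| * |_| ≤ 8 * (52 + 16 * t ^ (-(1/2) : ℝ)) :=
        mul_le_mul hcoef hX (abs_nonneg _) (by norm_num)
    _ ≤ 600 + 128 * t ^ (-(1/2) : ℝ) := by nlinarith

set_option maxHeartbeats 1000000 in
lemma hfun_bound2 {t : ℝ} (ht1 : 1 ≤ t) :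
    ‖hfun t‖ ≤ 2400 * t ^ (-(3/2) : ℝ) := by
  obtain ⟨hc0, hc7⟩ := log8_bounds
  have ht0 : (0:ℝ) < t := lt_of_lt_of_le one_pos ht1
  have htp : (0:ℝ) < t + 1 := by linarith
  have hL0 : 0 ≤ Real.log (t + 1) := Real.log_nonneg (by linarith)
  -- quarter-power bound on the log
  have h14pos : (0:ℝ) < (t+1) ^ ((1:ℝ)/4) := Real.rpow_pos_of_pos htp _
  have hLq : Real.log (t + 1) ≤ 4 * (t+1) ^ ((1:ℝ)/4) := by
    have h1 : Real.log ((t+1) ^ ((1:ℝ)/4)) = (1/4) * Real.log (t+1) :=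
      Real.log_rpow htp _
    have h2 : Real.log ((t+1) ^ ((1:ℝ)/4)) ≤ (t+1) ^ ((1:ℝ)/4) - 1 :=
      Real.log_le_sub_one_of_pos h14pos
    nlinarith
  have hq14 : (t+1) ^ ((1:ℝ)/4) ≤ 2 * t ^ ((1:ℝ)/4) := by
    have h1 : (t+1) ^ ((1:ℝ)/4) ≤ (2*t) ^ ((1:ℝ)/4) :=
      Real.rpow_le_rpow (by linarith) (by linarith) (by norm_num)
    have h2 : (2*t) ^ ((1:ℝ)/4) = 2 ^ ((1:ℝ)/4) * t ^ ((1:ℝ)/4) :=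
      Real.mul_rpow (by norm_num) ht0.le
    have h3 : (2:ℝ) ^ ((1:ℝ)/4) ≤ 2 := by
      calc (2:ℝ) ^ ((1:ℝ)/4) ≤ 2 ^ (1:ℝ) :=
            Real.rpow_le_rpow_of_exponent_le one_le_two (by norm_num)
        _ = 2 := Real.rpow_one 2
    have h4 : (0:ℝ) ≤ t ^ ((1:ℝ)/4) := Real.rpow_nonneg ht0.le _
    nlinarith
  have hL8 : Real.log (t + 1) ≤ 8 * t ^ ((1:ℝ)/4) := by nlinarith
  have hsq : (t ^ ((1:ℝ)/4))^2 = t ^ ((1:ℝ)/2) := by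
    rw [← Real.rpow_natCast (t ^ ((1:ℝ)/4)) 2, ← Real.rpow_mul ht0.le]
    norm_num
  have h12nn : (0:ℝ) ≤ t ^ ((1:ℝ)/2) := Real.rpow_nonneg ht0.le _
  have h14nn : (0:ℝ) ≤ t ^ ((1:ℝ)/4) := Real.rpow_nonneg ht0.le _
  have hL2 : (Real.log (t + 1))^2 ≤ 64 * t ^ ((1:ℝ)/2) := by nlinarith
  have h12ge1 : (1:ℝ) ≤ t ^ ((1:ℝ)/2) := by
    calc (1:ℝ) = 1 ^ ((1:ℝ)/2) := (Real.one_rpow _).symm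
      _ ≤ t ^ ((1:ℝ)/2) := Real.rpow_le_rpow zero_le_one ht1 (by norm_num)
  have h14le12 : t ^ ((1:ℝ)/4) ≤ t ^ ((1:ℝ)/2) :=
    Real.rpow_le_rpow_of_exponent_le ht1 (by norm_num)
  have hIm : Ifun t ≤ 16 * t ^ ((1:ℝ)/2) := by
    have h1 : Ifun t ≤ 4 * t ^ (-(1/2) : ℝ) := Ifun_le ht0
    have h2 : t ^ (-(1/2) : ℝ) ≤ 1 :=
      Real.rpow_le_one_of_one_le_of_nonpos ht1 (by norm_num)
    nlinarith
  have hI0 : 0 ≤ Ifun t := Ifun_nonneg ht0.le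
  -- bracket bound
  have hd1 : (2 * Real.log 8 - 10) / (t + 1) ≤ 10 := by
    rw [div_le_iff₀ htp]; nlinarith
  have hd2 : -10 ≤ (2 * Real.log 8 - 10) / (t + 1) := by
    rw [le_div_iff₀ htp]; nlinarith
  have hq : |(t - 1) / (t + 1)| ≤ 1 := by
    rw [abs_div, div_le_one (by rwa [abs_of_pos htp])]
    rw [abs_of_pos htp, abs_of_nonneg (by linarith)]
    linarith
  have hinner : |4 * Ifun t - 2 * (Real.log (t + 1)) ^ 2 - (1/2) * (Real.log 8) ^ 2|
      ≤ 217 * t ^ ((1:ℝ)/2) := by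
    rw [abs_le]; constructor <;> nlinarith
  have hqi : |(t - 1) / (t + 1) * (4 * Ifun t - 2 * (Real.log (t + 1)) ^ 2
      - (1/2) * (Real.log 8) ^ 2)| ≤ 217 * t ^ ((1:ℝ)/2) := by
    rw [abs_mul]
    calc |(t - 1) / (t + 1)| * |_| ≤ 1 * (217 * t ^ ((1:ℝ)/2)) :=
          mul_le_mul hq hinner (abs_nonneg _) zero_le_one
      _ = 217 * t ^ ((1:ℝ)/2) := one_mul _
  have hX : |Real.log 8 - 8 * Real.log (t + 1) - (2 * Real.log 8 - 10) / (t + 1)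
      - (t - 1) / (t + 1) * (4 * Ifun t - 2 * (Real.log (t + 1)) ^ 2
        - (1/2) * (Real.log 8) ^ 2)| ≤ 298 * t ^ ((1:ℝ)/2) := by
    have h := abs_le.1 hqi
    rw [abs_le]; constructor <;> nlinarith
  have hcoef : |8 * (t - 1) ^ 2 / (t + 1) ^ 4| ≤ 8 / t^2 := by
    rw [abs_of_nonneg (by positivity), div_le_div_iff₀ (by positivity) (by positivity)]
    have e1 : (t-1)^2 ≤ (t+1)^2 := by nlinarith
    have e2 : t^2 ≤ (t+1)^2 := by nlinarith
    nlinarith [sq_nonneg (t+1), mul_le_mul e1 e2 (by positivity) (by positivity)]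
  have hfinal : 8 / t^2 * (298 * t ^ ((1:ℝ)/2)) ≤ 2400 * t ^ (-(3/2) : ℝ) := by
    rw [rpow_neg_three_halves ht0, Real.sqrt_eq_rpow, div_mul_eq_mul_div, mul_comm,
      show 298 * t^((1:ℝ)/2) * 8 / t^2 = 2384 * (t^((1:ℝ)/2)/t^2) by ring]
    have hXnn : (0:ℝ) ≤ t^((1:ℝ)/2)/t^2 := div_nonneg h12nn (sq_nonneg t)
    linarith
  rw [Real.norm_eq_abs, hfun, abs_mul]
  calc |8 * (t - 1) ^ 2 / (t + 1) ^ 4| * |_|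
      ≤ 8 / t^2 * (298 * t ^ ((1:ℝ)/2)) :=
        mul_le_mul hcoef hX (abs_nonneg _) (by positivity)
    _ ≤ 2400 * t ^ (-(3/2) : ℝ) := hfinal

lemma hfun_integrableOn : IntegrableOn hfun (Ioi (0:ℝ)) := by
  rw [← Ioc_union_Ioi_eq_Ioi (zero_le_one : (0:ℝ) ≤ 1)]
  apply IntegrableOn.union
  · -- on (0,1]
    have hmaj : IntegrableOn (fun t : ℝ => 600 + 128 * t ^ (-(1/2) : ℝ)) (Ioc 0 1) := by
      apply Integrable.add
      · exact integrableOn_const (by simp [Real.volume_Ioc])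
      · have h1 : IntervalIntegrable (fun t : ℝ => t ^ (-(1/2) : ℝ)) volume 0 1 :=
          intervalIntegral.intervalIntegrable_rpow' (by norm_num)
        have h2 := (intervalIntegrable_iff_integrableOn_Ioc_of_le zero_le_one).1 h1
        exact h2.const_mul 128
    refine Integrable.mono' hmaj
      ((hfun_contOn.mono (Ioc_subset_Ioi_self)).aestronglyMeasurable measurableSet_Ioc) ?_
    filter_upwards [ae_restrict_mem measurableSet_Ioc] with t htm
    exact hfun_bound1 htm.1 htm.2
  · -- on (1,∞)
    have hmaj : IntegrableOn (fun t : ℝ => 2400 * t ^ (-(3/2) : ℝ)) (Ioi 1) :=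
      (integrableOn_Ioi_rpow_of_lt (by norm_num) one_pos).const_mul 2400
    refine Integrable.mono' hmaj
      ((hfun_contOn.mono (Ioi_subset_Ioi zero_le_one)).aestronglyMeasurable
        measurableSet_Ioi) ?_
    filter_upwards [ae_restrict_mem measurableSet_Ioi] with t htm
    exact hfun_bound2 (le_of_lt htm)


lemma integral_hfun : ∫ t in Ioi (0:ℝ), hfun t = 8 := by
  have := integral_Ioi_of_hasDerivAt_of_tendsto Ffun_cwa
    (fun x hx => Ffun_hasDerivAt hx) hfun_integrableOn Ffun_tendsto
  rw [this, Ffun_zero]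
  norm_num


lemma integrand_eq (y : EuclideanSpace ℝ (Fin 2)) :
    8 * (‖y‖ ^ 2 - 1) ^ 2 / (‖y‖ ^ 2 + 1) ^ 4 *
      ((1 / 2) * (vInf y) ^ 2 + vInf y - w0Inf y) = hfun (‖y‖ ^ 2) := by
  have hn : (0:ℝ) ≤ ‖y‖ ^ 2 := sq_nonneg _
  have h3 : ‖y‖ ^ 2 + 1 ≠ 0 := by positivity
  have hv : vInf y = Real.log 8 - 2 * Real.log (‖y‖ ^ 2 + 1) := by
    rw [vInf, Real.log_div (by norm_num) (by positivity), Real.log_pow]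
    push_cast
    rw [add_comm 1 (‖y‖ ^ 2)]
  have hIdef : Ifun (‖y‖ ^ 2)
      = ∫ s in Set.Ioi (‖y‖ ^ 2), Real.log (s + 1) / (s * (s + 1)) := by
    simp only [Ifun, g0]
  rw [w0Inf, hfun, hv, ← hIdef]
  field_simp
  ring

lemma volume_unit_ball :
    (volume (Metric.ball (0 : EuclideanSpace ℝ (Fin 2)) 1)).toReal = π := by
  rw [EuclideanSpace.volume_ball]
  simp only [Fintype.card_fin]
  norm_num
  exact Real.sq_sqrt pi_nonneg

/-- `∫_{ℝ²} (8(|y|²-1)²/(|y|²+1)⁴)·[(1/2)υ_∞² + υ_∞ − ω⁰_∞] dy = 8π`. -/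
theorem statement7 :
    (∫ y : EuclideanSpace ℝ (Fin 2),
        8 * (‖y‖ ^ 2 - 1) ^ 2 / (‖y‖ ^ 2 + 1) ^ 4 *
          ((1 / 2) * (vInf y) ^ 2 + vInf y - w0Inf y))
      = 8 * π := by

  have h1 : (∫ y : EuclideanSpace ℝ (Fin 2),
      8 * (‖y‖ ^ 2 - 1) ^ 2 / (‖y‖ ^ 2 + 1) ^ 4 *
        ((1 / 2) * (vInf y) ^ 2 + vInf y - w0Inf y))
      = ∫ y : EuclideanSpace ℝ (Fin 2), (fun r : ℝ => hfun (r ^ 2)) ‖y‖ := by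
    congr 1
    funext y
    exact integrand_eq y
  rw [h1, MeasureTheory.integral_fun_norm_addHaar volume (fun r : ℝ => hfun (r ^ 2))]
  have hrank : Module.finrank ℝ (EuclideanSpace ℝ (Fin 2)) = 2 := finrank_euclideanSpace_fin
  rw [hrank, measureReal_def, volume_unit_ball]
  -- now: 2 • π • ∫ y in Ioi 0, y ^ (2-1) • hfun (y^2) = 8π
  have hsub : ∫ y in Ioi (0:ℝ), y ^ (2 - 1 : ℕ) • hfun (y ^ 2) = 4 := by
    have h2 := integral_comp_rpow_Ioi_of_pos
      (g := fun t : ℝ => (2:ℝ)⁻¹ * hfun t) (p := 2) two_pos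
    rw [setIntegral_congr_fun measurableSet_Ioi
      (g := fun y : ℝ => y ^ (2 - 1 : ℕ) • hfun (y ^ 2)) ?_] at h2
    · rw [h2, MeasureTheory.integral_const_mul, integral_hfun]
      norm_num
    · intro x hx
      have hx0 : (0:ℝ) < x := hx
      simp only [smul_eq_mul]
      rw [show (2:ℝ) - 1 = 1 by norm_num, Real.rpow_one,
        show x ^ (2:ℝ) = x ^ (2:ℕ) by rw [← Real.rpow_natCast x 2]; norm_num]
      ring
  rw [hsub]
  simp [smul_eq_mul]
  ring
end
end

section
/- Let ξ ∈ Ω̄ for a bounded smooth domain Ω ⊂ ℝ², and for q > 1 define the function g_ε(x) = log(|x−ξ|²/(ε² + |x−ξ|²)) on Ω. Then there is a constant C > 0 independent of ε such that ‖g_ε‖_{L^q(Ω)} ≤ C ε^{2/q} for all small ε > 0. -/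
noncomputable section
open MeasureTheory Real Set Metric
open scoped ENNReal

section AuxStatement14

private lemma aux_log_le_rpow {t a : ℝ} (ht : 0 ≤ t) (ha : 0 < a) (ha1 : a ≤ 1) :
    Real.log (1 + t) ≤ t ^ a / a := by
  have h1 : (0:ℝ) < 1 + t := by linarith
  have h2 : Real.log (1 + t) = a⁻¹ * Real.log ((1 + t) ^ a) := by
    rw [Real.log_rpow h1]; field_simp
  have h3 : Real.log ((1 + t) ^ a) ≤ (1 + t) ^ a - 1 :=
    Real.log_le_sub_one_of_pos (Real.rpow_pos_of_pos h1 a)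
  have h4 : (1 + t) ^ a ≤ 1 + t ^ a := by
    have h := NNReal.rpow_add_le_add_rpow 1 t.toNNReal ha.le ha1
    have h' := NNReal.coe_le_coe.2 h
    push_cast at h'
    simpa [max_eq_left ht] using h'
  rw [h2, div_eq_inv_mul]
  have : Real.log ((1 + t) ^ a) ≤ t ^ a := by linarith
  exact mul_le_mul_of_nonneg_left this (inv_nonneg.2 ha.le)

local notation "E2" => EuclideanSpace ℝ (Fin 2)

private lemma aux_lintegral_radial (f : ℝ → ℝ≥0∞) (hf : Measurable f) :
    ∫⁻ x : E2, f ‖x‖ = (volume : Measure E2).toSphere univ *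
      ∫⁻ y in Ioi (0:ℝ), ENNReal.ofReal y * f y := by
  have hdim : Module.finrank ℝ E2 = 2 := finrank_euclideanSpace_fin
  have hmeas : Measurable fun p : sphere (0:E2) 1 × Ioi (0:ℝ) => f p.2 :=
    hf.comp (measurable_subtype_coe.comp measurable_snd)
  calc
    ∫⁻ x : E2, f ‖x‖
        = ∫⁻ x : ({0}ᶜ : Set E2), f ‖(x : E2)‖ ∂((volume : Measure E2).comap Subtype.val) := by
          rw [lintegral_subtype_comap (measurableSet_singleton (0:E2)).compl fun x => f ‖x‖,
            restrict_compl_singleton]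
    _ = ∫⁻ p : sphere (0:E2) 1 × Ioi (0:ℝ), f p.2
          ∂((volume : Measure E2).toSphere.prod
              (.volumeIoiPow (Module.finrank ℝ E2 - 1))) :=
      by simpa only [homeomorphUnitSphereProd_apply_snd_coe] using
        (volume : Measure E2).measurePreserving_homeomorphUnitSphereProd.lintegral_comp hmeas
    _ = (volume : Measure E2).toSphere univ *
          ∫⁻ y : Ioi (0:ℝ), f y ∂(Measure.volumeIoiPow (Module.finrank ℝ E2 - 1)) := by
          rw [lintegral_prod _ hmeas.aemeasurable]
          simp [lintegral_const, mul_comm]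
    _ = (volume : Measure E2).toSphere univ * ∫⁻ y in Ioi (0:ℝ), ENNReal.ofReal y * f y := by
          congr 1
          have hg : Measurable fun y : Ioi (0:ℝ) => f ↑y := hf.comp measurable_subtype_coe
          rw [Measure.volumeIoiPow,
            lintegral_withDensity_eq_lintegral_mul _
              ((measurable_subtype_coe.pow_const _).ennreal_ofReal)
              hg]
          simp only [Pi.mul_apply]
          rw [lintegral_subtype_comap measurableSet_Ioi
            (fun y : ℝ => ENNReal.ofReal (y ^ (Module.finrank ℝ E2 - 1)) * f y)]
          simp [hdim]

private lemma aux_lintegral_radial' (ξ : E2) (f : ℝ → ℝ≥0∞) (hf : Measurable f) :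
    ∫⁻ x : E2, f ‖x - ξ‖ = (volume : Measure E2).toSphere univ *
      ∫⁻ y in Ioi (0:ℝ), ENNReal.ofReal y * f y := by
  rw [show (∫⁻ x : E2, f ‖x - ξ‖) = ∫⁻ x : E2, f ‖x‖ from
    lintegral_sub_right_eq_self (fun x => f ‖x‖) ξ]
  exact aux_lintegral_radial f hf

private lemma aux_near {q ε : ℝ} (hq : 1 < q) (hε : 0 < ε) :
    ∫⁻ y in Ioi (0:ℝ), ENNReal.ofReal y *
      (Iio ε).indicator (fun y => ENNReal.ofReal ((2*q)^q * (ε * y⁻¹))) y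
      = ENNReal.ofReal ((2*q)^q * ε^2) := by
  have h1 : ∀ y : ℝ, ENNReal.ofReal y *
      (Iio ε).indicator (fun y => ENNReal.ofReal ((2*q)^q * (ε * y⁻¹))) y
      = (Iio ε).indicator
          (fun y => ENNReal.ofReal y * ENNReal.ofReal ((2*q)^q * (ε * y⁻¹))) y := by
    intro y; by_cases h : y ∈ Iio ε <;> simp [h]
  rw [lintegral_congr h1, lintegral_indicator measurableSet_Iio,
    Measure.restrict_restrict measurableSet_Iio,
    show Iio ε ∩ Ioi 0 = Ioo 0 ε from by ext y; simp [mem_Ioo, and_comm]]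
  have h2 : ∀ᵐ y ∂(volume : Measure ℝ), y ∈ Ioo 0 ε →
      ENNReal.ofReal y * ENNReal.ofReal ((2*q)^q * (ε * y⁻¹))
        = (fun _ : ℝ => ENNReal.ofReal ((2*q)^q * ε)) y := by
    refine ae_of_all _ fun y hy => ?_
    rw [← ENNReal.ofReal_mul hy.1.le]
    congr 1
    field_simp [hy.1.ne']
  rw [setLIntegral_congr_fun_ae measurableSet_Ioo h2, setLIntegral_const, Real.volume_Ioo,
    sub_zero, ← ENNReal.ofReal_mul (by positivity : (0:ℝ) ≤ (2*q)^q * ε)]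
  congr 1
  ring

private lemma aux_far {q ε : ℝ} (hq : 1 < q) (hε : 0 < ε) :
    ∫⁻ y in Ioi (0:ℝ), ENNReal.ofReal y *
      ((Iio ε)ᶜ).indicator (fun y => ENNReal.ofReal ((ε^2/y^2) ^ q)) y
      = ENNReal.ofReal (ε^2 * (2*q-2)⁻¹) := by
  have h1 : ∀ y : ℝ, ENNReal.ofReal y *
      ((Iio ε)ᶜ).indicator (fun y => ENNReal.ofReal ((ε^2/y^2) ^ q)) y
      = ((Iio ε)ᶜ).indicator
          (fun y => ENNReal.ofReal y * ENNReal.ofReal ((ε^2/y^2) ^ q)) y := by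
    intro y; by_cases h : y ∈ Ici ε <;> simp [compl_Iio, h]
  have hsub : Ici ε ⊆ Ioi (0:ℝ) := fun y hy => mem_Ioi.2 (lt_of_lt_of_le hε hy)
  rw [lintegral_congr h1, lintegral_indicator measurableSet_Iio.compl,
    Measure.restrict_restrict measurableSet_Iio.compl, compl_Iio,
    inter_eq_left.2 hsub]
  have h2 : ∀ᵐ y ∂(volume : Measure ℝ), y ∈ Ici ε →
      ENNReal.ofReal y * ENNReal.ofReal ((ε^2/y^2) ^ q)
        = (fun y : ℝ => ENNReal.ofReal (ε^(2*q) * y^(1-2*q))) y := by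
    refine ae_of_all _ fun y hy => ?_
    have hy0 : (0:ℝ) < y := lt_of_lt_of_le hε hy
    rw [← ENNReal.ofReal_mul hy0.le]
    congr 1
    have e1 : (ε^2/y^2 : ℝ) ^ q = ε^(2*q) / y^(2*q) := by
      rw [Real.div_rpow (sq_nonneg ε) (sq_nonneg y),
        ← Real.rpow_natCast ε 2, ← Real.rpow_natCast y 2,
        ← Real.rpow_mul hε.le, ← Real.rpow_mul hy0.le]
      norm_num
    have e2 : y ^ (1-2*q) = y / y^(2*q) := by
      rw [Real.rpow_sub hy0, Real.rpow_one]
    rw [e1, e2]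
    ring
  rw [setLIntegral_congr_fun_ae measurableSet_Ici h2]
  have hint : IntegrableOn (fun y : ℝ => ε^(2*q) * y^(1-2*q)) (Ici ε) := by
    rw [integrableOn_Ici_iff_integrableOn_Ioi]
    exact (integrableOn_Ioi_rpow_of_lt (by linarith) hε).const_mul _
  have hnn : 0 ≤ᵐ[(volume : Measure ℝ).restrict (Ici ε)]
      fun y : ℝ => ε^(2*q) * y^(1-2*q) := by
    refine (ae_restrict_iff' measurableSet_Ici).2 (ae_of_all _ fun y hy => ?_)
    exact mul_nonneg (Real.rpow_nonneg hε.le _)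
      (Real.rpow_nonneg (le_trans hε.le hy) _)
  rw [← ofReal_integral_eq_lintegral_ofReal hint hnn]
  congr 1
  rw [integral_Ici_eq_integral_Ioi, integral_const_mul,
    integral_Ioi_rpow_of_lt (by linarith) hε,
    show (1-2*q+1 : ℝ) = 2-2*q from by ring]
  have e2 : ε ^ (2*q) * ε^(2-2*q) = ε^2 := by
    rw [← Real.rpow_add hε, show (2*q+(2-2*q) : ℝ) = ((2:ℕ):ℝ) from by push_cast; ring,
      Real.rpow_natCast]
  calc ε^(2*q) * (-ε^(2-2*q)/(2-2*q)) = (ε^(2*q) * ε^(2-2*q)) * (-(2-2*q)⁻¹) := by ring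
    _ = ε^2 * (2*q-2)⁻¹ := by
        rw [e2]
        congr 1
        rw [show (2*q-2 : ℝ) = -(2-2*q) from by ring, ← neg_inv]

private lemma aux_pointwise {q ε : ℝ} (hq : 1 < q) (hε : 0 < ε) (r : ℝ) (hr : 0 ≤ r) :
    ENNReal.ofReal (|Real.log (r^2/(ε^2+r^2))| ^ q) ≤
      (Iio ε).indicator (fun y => ENNReal.ofReal ((2*q)^q * (ε * y⁻¹))) r
      + ((Iio ε)ᶜ).indicator (fun y => ENNReal.ofReal ((ε^2/y^2) ^ q)) r := by
  have hq0 : (0:ℝ) < q := by linarith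
  rcases eq_or_lt_of_le hr with h0 | hrpos
  · rw [← h0]
    simp [Real.zero_rpow (ne_of_gt hq0), Real.log_zero]
  · have hr2 : (0:ℝ) < r^2 := by positivity
    set t : ℝ := ε^2/r^2 with htdef
    have ht0 : 0 ≤ t := by positivity
    have habs : |Real.log (r^2/(ε^2+r^2))| = Real.log (1 + t) := by
      have hinv : r^2/(ε^2+r^2) = (1 + t)⁻¹ := by
        rw [htdef]; field_simp; ring
      rw [hinv, Real.log_inv, abs_neg,
        abs_of_nonneg (Real.log_nonneg (le_add_of_nonneg_right ht0))]
    by_cases hcase : r < ε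
    · rw [Set.indicator_of_mem (mem_Iio.2 hcase),
        Set.indicator_of_notMem (by simp [hcase]), add_zero]
      refine ENNReal.ofReal_le_ofReal ?_
      have ha : (0:ℝ) < 1/(2*q) := by positivity
      have ha1 : 1/(2*q) ≤ 1 := by
        rw [div_le_one (by linarith)]; linarith
      have hlog : |Real.log (r^2/(ε^2+r^2))| ≤ 2*q * t ^ (1/(2*q)) := by
        rw [habs]
        have h := aux_log_le_rpow ht0 ha ha1
        rwa [div_div_eq_mul_div, div_one, mul_comm] at h
      calc |Real.log (r^2/(ε^2+r^2))| ^ q ≤ (2*q * t ^ (1/(2*q))) ^ q :=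
            Real.rpow_le_rpow (abs_nonneg _) hlog hq0.le
        _ = (2*q)^q * (t ^ (1/(2*q))) ^ q :=
            Real.mul_rpow (by linarith) (Real.rpow_nonneg ht0 _)
        _ = (2*q)^q * t ^ ((1/(2*q))*q) := by rw [← Real.rpow_mul ht0]
        _ = (2*q)^q * t ^ ((2:ℝ)⁻¹) := by
            congr 2
            field_simp
        _ = (2*q)^q * (ε * r⁻¹) := by
            congr 1
            rw [htdef, ← div_pow, show ((2:ℝ)⁻¹) = 1/2 from by norm_num,
              ← Real.sqrt_eq_rpow, Real.sqrt_sq (div_nonneg hε.le hr), div_eq_mul_inv]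
    · rw [Set.indicator_of_notMem (by simpa using hcase),
        Set.indicator_of_mem (by simpa using hcase), zero_add]
      refine ENNReal.ofReal_le_ofReal ?_
      have hlog : |Real.log (r^2/(ε^2+r^2))| ≤ t := by
        rw [habs]
        have h := aux_log_le_rpow ht0 one_pos le_rfl
        rwa [Real.rpow_one, div_one] at h
      exact Real.rpow_le_rpow (abs_nonneg _) hlog hq0.le

/-- For `ξ ∈ Ω̄` and `q > 1`, the function
`g_ε(x) = log(|x−ξ|²/(ε² + |x−ξ|²))` satisfies `‖g_ε‖_{L^q(Ω)} ≤ C ε^{2/q}`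
for all small `ε > 0`, with `C` independent of `ε`. -/
theorem statement14 (Ω : Set (EuclideanSpace ℝ (Fin 2)))
    (hΩ : IsOpen Ω) (hΩb : Bornology.IsBounded Ω)
    (ξ : EuclideanSpace ℝ (Fin 2)) (hξ : ξ ∈ closure Ω)
    (q : ℝ) (hq : 1 < q) :
    ∃ C > (0:ℝ), ∃ ε₀ > (0:ℝ), ∀ ε : ℝ, 0 < ε → ε < ε₀ →
      (∫ x in Ω,
          |Real.log (‖x - ξ‖ ^ 2 / (ε ^ 2 + ‖x - ξ‖ ^ 2))| ^ q) ^ (1 / q)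
        ≤ C * ε ^ (2 / q) := by
  have hq0 : (0:ℝ) < q := by linarith
  set σr : ℝ := ((volume : Measure E2).toSphere univ).toReal with hσr
  set K : ℝ := (2*q)^q + (2*q-2)⁻¹ with hKdef
  have hK1 : (0:ℝ) < (2*q)^q := Real.rpow_pos_of_pos (by linarith) q
  have hK2 : (0:ℝ) < (2*q-2)⁻¹ := by rw [inv_pos]; linarith
  have hKpos : 0 < K := by rw [hKdef]; linarith
  have hσnn : 0 ≤ σr := ENNReal.toReal_nonneg
  refine ⟨(σr*K)^(1/q) + 1, by positivity, 1, one_pos, fun ε hε hε1 => ?_⟩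
  set f₁ : ℝ → ℝ≥0∞ := (Iio ε).indicator (fun y => ENNReal.ofReal ((2*q)^q * (ε * y⁻¹)))
    with hf₁def
  set f₂ : ℝ → ℝ≥0∞ := ((Iio ε)ᶜ).indicator (fun y => ENNReal.ofReal ((ε^2/y^2) ^ q))
    with hf₂def
  have hf₁ : Measurable f₁ :=
    ((measurable_const.mul (measurable_const.mul measurable_inv)).ennreal_ofReal).indicator
      measurableSet_Iio
  have hf₂ : Measurable f₂ := by
    refine Measurable.indicator ?_ measurableSet_Iio.compl
    exact (((continuous_rpow_const hq0.le).measurable).comp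
      (measurable_const.div (measurable_id.pow_const 2))).ennreal_ofReal
  have hnorm : Measurable fun x : E2 => ‖x - ξ‖ :=
    ((continuous_id.sub continuous_const).norm).measurable
  have hcont : Continuous fun x : E2 => ‖x - ξ‖ ^ 2 / (ε ^ 2 + ‖x - ξ‖ ^ 2) := by
    refine Continuous.div (by fun_prop) (by fun_prop) fun x => ?_
    positivity
  have hm : Measurable fun x : E2 =>
      |Real.log (‖x - ξ‖ ^ 2 / (ε ^ 2 + ‖x - ξ‖ ^ 2))| ^ q :=
    ((continuous_rpow_const hq0.le).measurable).comp
      ((Real.measurable_log.comp hcont.measurable).abs)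
  have hσtop : (volume : Measure E2).toSphere univ ≠ ⊤ := measure_ne_top _ _
  have key : (∫ x in Ω, |Real.log (‖x - ξ‖ ^ 2 / (ε ^ 2 + ‖x - ξ‖ ^ 2))| ^ q)
      ≤ σr * (K * ε^2) := by
    rw [MeasureTheory.integral_eq_lintegral_of_nonneg_ae
      (ae_of_all _ fun x => Real.rpow_nonneg (abs_nonneg _) q) hm.aestronglyMeasurable]
    have step : (∫⁻ x in Ω, ENNReal.ofReal
          (|Real.log (‖x - ξ‖ ^ 2 / (ε ^ 2 + ‖x - ξ‖ ^ 2))| ^ q))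
        ≤ ENNReal.ofReal (σr * (K * ε^2)) := by
      calc (∫⁻ x in Ω, ENNReal.ofReal
              (|Real.log (‖x - ξ‖ ^ 2 / (ε ^ 2 + ‖x - ξ‖ ^ 2))| ^ q))
          ≤ ∫⁻ x : E2, ENNReal.ofReal
              (|Real.log (‖x - ξ‖ ^ 2 / (ε ^ 2 + ‖x - ξ‖ ^ 2))| ^ q) :=
            setLIntegral_le_lintegral _ _
        _ ≤ ∫⁻ x : E2, (f₁ ‖x - ξ‖ + f₂ ‖x - ξ‖) :=
            lintegral_mono fun x => aux_pointwise hq hε ‖x - ξ‖ (norm_nonneg _)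
        _ = (∫⁻ x : E2, f₁ ‖x - ξ‖) + ∫⁻ x : E2, f₂ ‖x - ξ‖ :=
            lintegral_add_left
              ((hf₁.comp hnorm : Measurable fun x : E2 => f₁ ‖x - ξ‖)) _
        _ = (volume : Measure E2).toSphere univ * ENNReal.ofReal ((2*q)^q * ε^2)
              + (volume : Measure E2).toSphere univ * ENNReal.ofReal (ε^2 * (2*q-2)⁻¹) := by
            rw [aux_lintegral_radial' ξ f₁ hf₁, aux_lintegral_radial' ξ f₂ hf₂,
              aux_near hq hε, aux_far hq hε]
        _ = ENNReal.ofReal (σr * (K * ε^2)) := by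
            rw [← mul_add, ← ENNReal.ofReal_add (by positivity) (by positivity),
              show ((2*q)^q * ε^2 + ε^2 * (2*q-2)⁻¹ : ℝ) = K * ε^2 from by rw [hKdef]; ring,
              ENNReal.ofReal_mul hσnn, ENNReal.ofReal_toReal hσtop]
    have h3 := ENNReal.toReal_mono ENNReal.ofReal_ne_top step
    rwa [ENNReal.toReal_ofReal (by positivity)] at h3
  have h2 := Real.rpow_le_rpow
    (integral_nonneg fun x => Real.rpow_nonneg (abs_nonneg _) q) key
    (by positivity : (0:ℝ) ≤ 1/q)
  calc (∫ x in Ω, |Real.log (‖x - ξ‖ ^ 2 / (ε ^ 2 + ‖x - ξ‖ ^ 2))| ^ q) ^ (1/q)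
      ≤ (σr * (K * ε^2)) ^ (1/q) := h2
    _ = (σr*K)^(1/q) * (ε^2)^(1/q) := by
        rw [← mul_assoc, Real.mul_rpow (by positivity) (by positivity)]
    _ = (σr*K)^(1/q) * ε^(2/q) := by
        congr 1
        rw [← Real.rpow_natCast ε 2, ← Real.rpow_mul hε.le]
        norm_num [div_eq_mul_inv]
    _ ≤ ((σr*K)^(1/q) + 1) * ε^(2/q) := by
        have hεq : (0:ℝ) ≤ ε^(2/q) := Real.rpow_nonneg hε.le _
        have : (σr*K)^(1/q) ≤ (σr*K)^(1/q) + 1 := by linarith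
        exact mul_le_mul_of_nonneg_right this hεq


end AuxStatement14
end
end
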